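/- Under the blow-up change of coordinates p̃ = Φ^s_r(p), all mixed transformed coefficients involving the index r vanish: ã^{rl}(p̃) = ã^{lr}(p̃) = 0 for every l ≠ r, where ã^{kl} = Σ_{i,j} a^{ij}(∂p̃^k/∂p^i)(∂p̃^l/∂p^j) and a^{ij}(p) = p^i(δ^i_j − p^j). -/

import Mathlib

lemma blowup_fderiv_r (d : ℕ) (s r : Fin d) (hsr : s ≠ r) (p : Fin d → ℝ)
    (hp : 0 < p s + p r) (i : Fin d) :
    fderiv ℝ (fun q : Fin d → ℝ => q r / (q s + q r)) p (Pi.single i 1)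
      = ((if i = r then p s else 0) - (if i = s then p r else 0)) / (p s + p r)^2 := by
  have hne : p s + p r ≠ 0 := ne_of_gt hp
  have hr : HasFDerivAt (fun q : Fin d → ℝ => q r)
      (ContinuousLinearMap.proj r : (Fin d → ℝ) →L[ℝ] ℝ) p :=
    (ContinuousLinearMap.proj (R := ℝ) (φ := fun _ : Fin d => ℝ) r).hasFDerivAt (x := p)
  have hs1 : HasFDerivAt (fun q : Fin d → ℝ => q s + q r)
      ((ContinuousLinearMap.proj s : (Fin d → ℝ) →L[ℝ] ℝ)
        + (ContinuousLinearMap.proj r : (Fin d → ℝ) →L[ℝ] ℝ)) p :=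
    ((ContinuousLinearMap.proj (R := ℝ) (φ := fun _ : Fin d => ℝ) s).hasFDerivAt (x := p)).add
      ((ContinuousLinearMap.proj (R := ℝ) (φ := fun _ : Fin d => ℝ) r).hasFDerivAt (x := p))
  have hinv : HasFDerivAt (fun q : Fin d → ℝ => (q s + q r)⁻¹)
      ((ContinuousLinearMap.smulRight (1 : ℝ →L[ℝ] ℝ) (-((p s + p r) ^ 2)⁻¹)).comp
        ((ContinuousLinearMap.proj s : (Fin d → ℝ) →L[ℝ] ℝ) + ContinuousLinearMap.proj r)) p :=
    (hasFDerivAt_inv hne).comp p hs1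
  have hmul : HasFDerivAt (fun q : Fin d → ℝ => q r * (q s + q r)⁻¹) _ p := hr.mul hinv
  have heq : (fun q : Fin d → ℝ => q r / (q s + q r))
      = fun q : Fin d → ℝ => q r * (q s + q r)⁻¹ := by
    funext q; rw [div_eq_mul_inv]
  rw [heq, hmul.fderiv]
  simp [Pi.single_apply]
  by_cases h1 : i = r
  · subst h1
    simp [hsr, hsr.symm]
    field_simp
    ring
  · by_cases h2 : i = s
    · subst h2
      simp [hsr, hsr.symm, Ne.symm h1]
      field_simp
    · simp [h1, h2, Ne.symm h1, Ne.symm h2]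

lemma blowup_fderiv_s (d : ℕ) (s r : Fin d) (p : Fin d → ℝ) (i : Fin d) :
    fderiv ℝ (fun q : Fin d → ℝ => q s + q r) p (Pi.single i 1)
      = (if i = s then (1:ℝ) else 0) + (if i = r then (1:ℝ) else 0) := by
  have hs1 : HasFDerivAt (fun q : Fin d → ℝ => q s + q r)
      ((ContinuousLinearMap.proj s : (Fin d → ℝ) →L[ℝ] ℝ)
        + (ContinuousLinearMap.proj r : (Fin d → ℝ) →L[ℝ] ℝ)) p :=
    ((ContinuousLinearMap.proj (R := ℝ) (φ := fun _ : Fin d => ℝ) s).hasFDerivAt (x := p)).add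
      ((ContinuousLinearMap.proj (R := ℝ) (φ := fun _ : Fin d => ℝ) r).hasFDerivAt (x := p))
  rw [hs1.fderiv]
  simp [Pi.single_apply, eq_comm]

lemma blowup_fderiv_other (d : ℕ) (l : Fin d) (p : Fin d → ℝ) (i : Fin d) :
    fderiv ℝ (fun q : Fin d → ℝ => q l) p (Pi.single i 1)
      = (if i = l then (1:ℝ) else 0) := by
  have h : HasFDerivAt (fun q : Fin d → ℝ => q l)
      (ContinuousLinearMap.proj l : (Fin d → ℝ) →L[ℝ] ℝ) p :=
    (ContinuousLinearMap.proj (R := ℝ) (φ := fun _ : Fin d => ℝ) l).hasFDerivAt (x := p)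
  rw [h.fderiv]
  simp [Pi.single_apply, eq_comm]



/-- Under the blow-up p̃ = Φ^s_r(p), all mixed transformed coefficients
involving the index r vanish: ã^{rl}(p̃) = ã^{lr}(p̃) = 0 for every l ≠ r. -/
theorem blowup_coeff_mixed_vanish (d : ℕ) (s r : Fin d) (hsr : s ≠ r)
    (Φ : (Fin d → ℝ) → (Fin d → ℝ))
    (hΦ : ∀ p i, Φ p i =
      if i = s then p s + p r else if i = r then p r / (p s + p r) else p i)
    (a : (Fin d → ℝ) → Fin d → Fin d → ℝ)
    (ha : ∀ p i j, a p i j = p i * ((if i = j then (1:ℝ) else 0) - p j))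
    (p : Fin d → ℝ) (hp : 0 < p s + p r)
    (l : Fin d) (hl : l ≠ r) :
    (∑ i, ∑ j, a p i j *
        fderiv ℝ (fun q => Φ q r) p (Pi.single i 1) *
        fderiv ℝ (fun q => Φ q l) p (Pi.single j 1)) = 0 ∧
    (∑ i, ∑ j, a p i j *
        fderiv ℝ (fun q => Φ q l) p (Pi.single i 1) *
        fderiv ℝ (fun q => Φ q r) p (Pi.single j 1)) = 0 := by
  have hΦr : (fun q => Φ q r) = fun q : Fin d → ℝ => q r / (q s + q r) := by
    funext q; rw [hΦ]; simp [hsr.symm]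
  have key_r : ∀ i, fderiv ℝ (fun q => Φ q r) p (Pi.single i 1)
      = ((if i = r then p s else 0) - (if i = s then p r else 0)) / (p s + p r)^2 := by
    intro i; rw [hΦr]; exact blowup_fderiv_r d s r hsr p hp i
  have key_l : ∀ j, fderiv ℝ (fun q => Φ q l) p (Pi.single j 1)
      = if l = s then (if j = s then (1:ℝ) else 0) + (if j = r then (1:ℝ) else 0)
        else (if j = l then (1:ℝ) else 0) := by
    intro j
    by_cases hls : l = s
    · subst hls
      have : (fun q => Φ q l) = fun q : Fin d → ℝ => q l + q r := by
        funext q; rw [hΦ]; simp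
      rw [this]; simp [blowup_fderiv_s d l r p j]
    · have : (fun q => Φ q l) = fun q : Fin d → ℝ => q l := by
        funext q; rw [hΦ]; simp [hls, hl]
      rw [this]; simp [hls, blowup_fderiv_other d l p j]
  have hne : p s + p r ≠ 0 := ne_of_gt hp
  constructor
  · simp only [key_r, key_l, ha]
    by_cases hls : l = s
    · subst hls
      simp only [if_pos rfl]
      simp [mul_sub, sub_mul, mul_add, add_mul, mul_ite, ite_mul, mul_zero, zero_mul,
        Finset.sum_sub_distrib, Finset.sum_add_distrib, Finset.sum_ite_eq, Finset.sum_ite_eq',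
        div_eq_mul_inv, hsr, hsr.symm]
      field_simp
      ring
    · simp only [if_neg hls]
      simp [mul_sub, sub_mul, mul_add, add_mul, mul_ite, ite_mul, mul_zero, zero_mul,
        Finset.sum_sub_distrib, Finset.sum_add_distrib, Finset.sum_ite_eq, Finset.sum_ite_eq',
        div_eq_mul_inv, hsr, hsr.symm, hl, Ne.symm hl, hls, Ne.symm hls]
      field_simp
      ring
  · simp only [key_r, key_l, ha]
    by_cases hls : l = s
    · subst hls
      simp only [if_pos rfl]
      simp [mul_sub, sub_mul, mul_add, add_mul, mul_ite, ite_mul, mul_zero, zero_mul,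
        Finset.sum_sub_distrib, Finset.sum_add_distrib, Finset.sum_ite_eq, Finset.sum_ite_eq',
        div_eq_mul_inv, hsr, hsr.symm]
      field_simp
      ring
    · simp only [if_neg hls]
      simp [mul_sub, sub_mul, mul_add, add_mul, mul_ite, ite_mul, mul_zero, zero_mul,
        Finset.sum_sub_distrib, Finset.sum_add_distrib, Finset.sum_ite_eq, Finset.sum_ite_eq',
        div_eq_mul_inv, hsr, hsr.symm, hl, Ne.symm hl, hls, Ne.symm hls]
      field_simp
      ring
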